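/- arXiv:2303.18000 — 2 statements merged into one kernel-verified Lean document; each statement's English description precedes it below -/
import Mathlib

section
/- A_c maps V♯ ∩ U_c into V♯: for every φ ∈ V♯ ∩ U_c one has A_c φ ∈ V♯. -/
open Real Filter Set Function MeasureTheory
open scoped ENNReal

noncomputable section

namespace HopfStmt

/-- The sup part of the periodic Hölder norm. -/
def supN {E : Type*} [NormedAddCommGroup E] (u : ℝ → E) : ℝ := ⨆ t : ℝ, ‖u t‖

/-- The Hölder seminorm part. -/
def holS {E : Type*} [NormedAddCommGroup E] (β : ℝ) (u : ℝ → E) : ℝ :=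
  ⨆ p : ℝ × ℝ, ‖u p.1 - u p.2‖ / |p.1 - p.2| ^ β

/-- The norm of `C^β_{2π}(ℝ, E)`. -/
def holderN {E : Type*} [NormedAddCommGroup E] (β : ℝ) (u : ℝ → E) : ℝ :=
  supN u + holS β u

/-- Membership in `C^β_{2π}(ℝ, E)`: `2π`-periodic and `β`-Hölder continuous. -/
def MemHolder {E : Type*} [NormedAddCommGroup E] (β : ℝ) (u : ℝ → E) : Prop :=
  Function.Periodic u (2 * π) ∧ ∃ C : ℝ, ∀ s t : ℝ, ‖u s - u t‖ ≤ C * |s - t| ^ β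

/-- Membership in the span of the first cosine and sine modes: `w = a ⊗ c₁ + b ⊗ s₁`. -/
def memSp1 {E : Type*} [AddCommGroup E] [Module ℝ E] (w : ℝ → E) : Prop :=
  ∃ a b : E, ∀ t : ℝ, w t = Real.cos t • a + Real.sin t • b

/-- `L₁ ψ := Re (ψ ⊗ e₁)`, i.e. `(L₁ψ)(t) = cos t • ψ₁ - sin t • ψ₂` for `ψ = ψ₁ + iψ₂`. -/
def L1 {E : Type*} [AddCommGroup E] [Module ℝ E] (ψ : E × E) : ℝ → E :=
  fun t => Real.cos t • ψ.1 - Real.sin t • ψ.2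

/-- Multiplication by the complex scalar `c` on the complexification `E_c = E × E`. -/
def csmul {E : Type*} [AddCommGroup E] [Module ℝ E] (c : ℂ) (x : E × E) : E × E :=
  (c.re • x.1 - c.im • x.2, c.im • x.1 + c.re • x.2)

/-- Complex conjugation on the complexification. -/
def conjC {E : Type*} [AddCommGroup E] (x : E × E) : E × E := (x.1, -x.2)

variable {V : Type*} [NormedAddCommGroup V] [NormedSpace ℝ V]
variable {U : Type*} [NormedAddCommGroup U] [NormedSpace ℝ U]

/-- The complexified inclusion `ι_c : U_c → V_c`. -/
def iotaC (ι : U →L[ℝ] V) (ψ : U × U) : V × V := (ι ψ.1, ι ψ.2)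

/-- The complexified operator `A_c : U_c → V_c`. -/
def AcC (A : U →L[ℝ] V) (ψ : U × U) : V × V := (A ψ.1, A ψ.2)

/-- The operator `c - A_c : U_c → V_c` for a complex scalar `c`. -/
def cMinusA (ι A : U →L[ℝ] V) (c : ℂ) (ψ : U × U) : V × V :=
  csmul c (iotaC ι ψ) - AcC A ψ

/-- The kernel `𝒩(i - A_c) ⊆ U_c`. -/
def kerIA (ι A : U →L[ℝ] V) : Set (U × U) := {ψ | cMinusA ι A Complex.I ψ = 0}

/-- The range `ℛ(i - A_c) ⊆ V_c`. -/
def ranIA (ι A : U →L[ℝ] V) : Set (V × V) := Set.range (cMinusA ι A Complex.I)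

/-- `V♯ := ℛ(i - A_c) ∩ ℛ(-i - A_c)`. -/
def Vsharp (ι A : U →L[ℝ] V) : Set (V × V) :=
  Set.range (cMinusA ι A Complex.I) ∩ Set.range (cMinusA ι A (-Complex.I))

/-- The `V`-valued time derivative of `w : ℝ → U` (through the inclusion `ι`). -/
def Xder (ι : U →L[ℝ] V) (w : ℝ → U) : ℝ → V := fun t => deriv (fun s => ι (w s)) t

/-- Membership in `X := C^{1+β}_{2π}(ℝ,V) ∩ C^β_{2π}(ℝ,U)`. -/
def MemX (β : ℝ) (ι : U →L[ℝ] V) (w : ℝ → U) : Prop :=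
  MemHolder β w ∧ (∀ t : ℝ, DifferentiableAt ℝ (fun s => ι (w s)) t) ∧
    MemHolder β (Xder ι w)

/-- The norm of `X`: `‖w‖_X = ‖w‖_{V,1+β} + ‖w‖_{U,β}`. -/
def normX (β : ℝ) (ι : U →L[ℝ] V) (w : ℝ → U) : ℝ :=
  (holderN β (fun t => ι (w t)) + holderN β (Xder ι w)) + holderN β w

/-- `T₁ w := ẇ - A w`. -/
def T1op (ι A : U →L[ℝ] V) (w : ℝ → U) : ℝ → V := fun t => Xder ι w t - A (w t)

/-- Hypothesis (H2): `±i` are simple eigenvalues of `A`, i.e.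
`dim 𝒩(i - A_c) = 1 = codim ℛ(i - A_c)` and nonzero kernel elements do not lie in the range. -/
def H2hyp (ι A : U →L[ℝ] V) : Prop :=
  (∃ ψ ∈ kerIA ι A, ψ ≠ 0 ∧ ∀ φ ∈ kerIA ι A, ∃ c : ℂ, φ = csmul c ψ) ∧
  (∃ χ : V × V, χ ∉ ranIA ι A ∧ ∀ v : V × V, ∃ c : ℂ, ∃ r ∈ ranIA ι A, v = r + csmul c χ) ∧
  (∀ ψ ∈ kerIA ι A, ψ ≠ 0 → iotaC ι ψ ∉ ranIA ι A)

/-- Hypothesis (H4): `ik ∈ ρ(A_c)` for `k ∈ ℤ \ {-1, 1}`. -/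
def H4hyp (ι A : U →L[ℝ] V) : Prop :=
  ∀ k : ℤ, k ≠ 1 → k ≠ -1 → Function.Bijective (cMinusA ι A (Complex.I * (k : ℂ)))

/-- Hypothesis (H5): `‖(in - A_c)⁻¹‖ ≤ M / n` for `n = 2, 3, 4, ...`. -/
def H5hyp (ι A : U →L[ℝ] V) : Prop :=
  ∃ M : ℝ, 0 < M ∧ ∀ n : ℕ, 2 ≤ n →
    ∀ ψ : U × U, (n : ℝ) * ‖iotaC ι ψ‖ ≤ M * ‖cMinusA ι A (Complex.I * (n : ℂ)) ψ‖

/-- Hypothesis (H3): the eigenvalue branch `μ(λ)` of `A_c + (h_u(λ,0))_c` through `μ(0) = i`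
satisfies the transversality condition `Re μ'(0) ≠ 0`. -/
def H3hyp (ι A : U →L[ℝ] V) (h : ℝ → U → V) : Prop :=
  ∃ (ε : ℝ) (μ : ℝ → ℂ) (ψb : ℝ → U × U) (μ' : ℂ), 0 < ε ∧
    μ 0 = Complex.I ∧ ψb 0 ∈ kerIA ι A ∧ ψb 0 ≠ 0 ∧
    ContinuousOn ψb (Metric.ball (0 : ℝ) ε) ∧
    (∀ lam ∈ Metric.ball (0 : ℝ) ε,
      AcC A (ψb lam) + (fderiv ℝ (h lam) 0 (ψb lam).1, fderiv ℝ (h lam) 0 (ψb lam).2)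
        = csmul (μ lam) (iotaC ι (ψb lam))) ∧
    HasDerivAt μ μ' 0 ∧ μ'.re ≠ 0

/-- Unbundled notion: `f : (E, NE) → (F, NF)` is of class `C²` on `D` (Fréchet sense). -/
def UFC2On {E F : Type*} [AddCommGroup E] [Module ℝ E] [AddCommGroup F] [Module ℝ F]
    (NE : E → ℝ) (NF : F → ℝ) (D : Set E) (f : E → F) : Prop :=
  ∃ (D1 : E → E → F) (D2 : E → E → E → F),
    (∀ x ∈ D, IsLinearMap ℝ (D1 x) ∧ ∃ C : ℝ, ∀ e, NF (D1 x e) ≤ C * NE e) ∧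
    (∀ x ∈ D, ∀ ε > (0 : ℝ), ∃ d > (0 : ℝ), ∀ y ∈ D, NE (y - x) < d →
      NF (f y - f x - D1 x (y - x)) ≤ ε * NE (y - x)) ∧
    (∀ x ∈ D, (∀ e, IsLinearMap ℝ (D2 x e)) ∧ (∀ e', IsLinearMap ℝ (fun e => D2 x e e')) ∧
      ∃ C : ℝ, ∀ e e', NF (D2 x e e') ≤ C * NE e * NE e') ∧
    (∀ x ∈ D, ∀ ε > (0 : ℝ), ∃ d > (0 : ℝ), ∀ y ∈ D, NE (y - x) < d →
      ∀ e, NF (D1 y e - D1 x e - D2 x (y - x) e) ≤ ε * NE (y - x) * NE e) ∧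
    (∀ x ∈ D, ∀ ε > (0 : ℝ), ∃ d > (0 : ℝ), ∀ y ∈ D, NE (y - x) < d →
      ∀ e e', NF (D2 y e e' - D2 x e e') ≤ ε * NE e * NE e')

/-- Unbundled notion: `f : ℝ → (E, NE)` is `C¹` on `s` with derivative `f'`. -/
def UC1On {E : Type*} [AddCommGroup E] [Module ℝ E] (NE : E → ℝ) (s : Set ℝ)
    (f f' : ℝ → E) : Prop :=
  (∀ a ∈ s, ∀ ε > (0 : ℝ), ∃ d > (0 : ℝ), ∀ b ∈ s, |b - a| < d →
    NE (f b - f a - (b - a) • f' a) ≤ ε * |b - a|) ∧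
  (∀ a ∈ s, ∀ ε > (0 : ℝ), ∃ d > (0 : ℝ), ∀ b ∈ s, |b - a| < d → NE (f' b - f' a) ≤ ε)



lemma key_mem {V : Type*} [NormedAddCommGroup V] [NormedSpace ℝ V]
    {U : Type*} [NormedAddCommGroup U] [NormedSpace ℝ U]
    (ι A : U →L[ℝ] V) (c : ℂ) (φ : U × U)
    (h : iotaC ι φ ∈ Set.range (cMinusA ι A c)) :
    AcC A φ ∈ Set.range (cMinusA ι A c) := by
  obtain ⟨ψ, hψ⟩ := h
  refine ⟨csmul c ψ - φ, ?_⟩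
  have hcomm : ∀ χ : U × U, cMinusA ι A c (csmul c χ) = csmul c (cMinusA ι A c χ) := by
    intro χ
    simp only [cMinusA, csmul, iotaC, AcC, Prod.mk_sub_mk, Prod.mk.injEq,
      map_sub, map_add, _root_.map_smul]
    constructor <;> module
  have hadd : ∀ χ χ' : U × U, cMinusA ι A c (χ - χ') = cMinusA ι A c χ - cMinusA ι A c χ' := by
    intro χ χ'
    simp only [cMinusA, csmul, iotaC, AcC, Prod.fst_sub, Prod.snd_sub, Prod.mk_sub_mk,
      Prod.mk.injEq, map_sub, smul_sub]
    constructor <;> abel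
  rw [hadd, hcomm, hψ]
  have : cMinusA ι A c φ = csmul c (iotaC ι φ) - AcC A φ := rfl
  rw [this]
  abel

/-- **Lemma 3.1.** `A_c {V♯ ∩ U_c} ⊆ V♯`, where `V♯ = ℛ(i - A_c) ∩ ℛ(-i - A_c)`. -/
theorem Ac_maps_Vsharp_inter_Uc_into_Vsharp
    {V : Type*} [NormedAddCommGroup V] [NormedSpace ℝ V] [CompleteSpace V]
    {U : Type*} [NormedAddCommGroup U] [NormedSpace ℝ U] [CompleteSpace U]
    (ι A : U →L[ℝ] V) (hι : Function.Injective ι)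
    (hUnorm : ∀ u : U, ‖u‖ = ‖A u‖) (hAbij : Function.Bijective A) :
    ∀ φ : U × U, iotaC ι φ ∈ Vsharp ι A → AcC A φ ∈ Vsharp ι A := by
  intro φ hφ
  exact ⟨key_mem ι A _ φ hφ.1, key_mem ι A _ φ hφ.2⟩
end HopfStmt
end
end

section
/- Assume (H2): ±i are simple eigenvalues of A, i.e. dim 𝒩(i−A_c) = 1 = codim ℛ(i−A_c) and every nonzero ψ ∈ 𝒩(i−A_c) satisfies ψ ∉ ℛ(i−A_c). Then V_c = V⋆ ⊕ V♯, i.e. V_c is the (internal) direct sum of the closed subspaces V⋆ and V♯. -/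
open Real Filter Set Function MeasureTheory
open scoped ENNReal

noncomputable section

namespace HopfStmt

variable {V : Type*} [NormedAddCommGroup V] [NormedSpace ℝ V]
variable {U : Type*} [NormedAddCommGroup U] [NormedSpace ℝ U]

/-! ### Auxiliary lemmas for Proposition 3.4 (i) -/

section Aux

set_option linter.unusedSectionVars false

variable {E : Type*} [AddCommGroup E] [Module ℝ E]

lemma csmul_add' (c : ℂ) (x y : E × E) : csmul c (x + y) = csmul c x + csmul c y := by
  simp only [csmul, Prod.fst_add, Prod.snd_add, Prod.mk_add_mk, Prod.mk.injEq, smul_add]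
  constructor <;> module

lemma add_csmul' (c d : ℂ) (x : E × E) : csmul (c + d) x = csmul c x + csmul d x := by
  simp only [csmul, Complex.add_re, Complex.add_im, Prod.mk_add_mk, Prod.mk.injEq, add_smul]
  constructor <;> module

lemma csmul_csmul (c d : ℂ) (x : E × E) : csmul c (csmul d x) = csmul (c * d) x := by
  simp only [csmul, Complex.mul_re, Complex.mul_im, Prod.mk.injEq]
  constructor <;> module

@[simp] lemma csmul_one (x : E × E) : csmul 1 x = x := by
  simp only [csmul, Complex.one_re, Complex.one_im, one_smul, zero_smul, sub_zero, add_zero,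
    zero_add]

@[simp] lemma zero_csmul (x : E × E) : csmul 0 x = 0 := by
  simp only [csmul, Complex.zero_re, Complex.zero_im, zero_smul, sub_zero, add_zero]
  rfl

@[simp] lemma csmul_zero' (c : ℂ) : csmul c (0 : E × E) = 0 := by
  simp only [csmul, Prod.fst_zero, Prod.snd_zero, smul_zero, sub_zero, add_zero]
  rfl

lemma csmul_sub' (c : ℂ) (x y : E × E) : csmul c (x - y) = csmul c x - csmul c y := by
  simp only [csmul, Prod.fst_sub, Prod.snd_sub, Prod.mk_sub_mk, Prod.mk.injEq, smul_sub]
  constructor <;> module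

lemma smul_csmul (a : ℝ) (c : ℂ) (x : E × E) : csmul (a • c) x = a • csmul c x := by
  apply Prod.ext <;>
    simp only [csmul, Complex.real_smul, Complex.mul_re, Complex.mul_im, Complex.ofReal_re,
      Complex.ofReal_im, zero_mul, sub_zero, add_zero, zero_add, Prod.smul_fst, Prod.smul_snd] <;>
    module

lemma csmul_real (r : ℝ) (x : E × E) : csmul (r : ℂ) x = r • x := by
  apply Prod.ext <;>
    simp only [csmul, Complex.ofReal_re, Complex.ofReal_im, zero_smul, sub_zero, add_zero,
      zero_add, Prod.smul_fst, Prod.smul_snd]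

lemma csmul_eq_smul_add (c : ℂ) (x : E × E) :
    csmul c x = c.re • x + c.im • csmul Complex.I x := by
  apply Prod.ext <;>
    simp only [csmul, Complex.I_re, Complex.I_im, zero_smul, one_smul, zero_sub, zero_add,
      add_zero, Prod.fst_add, Prod.snd_add, Prod.smul_fst, Prod.smul_snd] <;> module

@[simp] lemma conjC_conjC (x : E × E) : conjC (conjC x) = x := by simp [conjC]

lemma conjC_csmul (c : ℂ) (x : E × E) :
    conjC (csmul c x) = csmul (starRingEnd ℂ c) (conjC x) := by
  simp only [conjC, csmul, Complex.conj_re, Complex.conj_im, Prod.mk.injEq, smul_neg, neg_smul]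
  constructor <;> module

lemma conjC_add' (x y : E × E) : conjC (x + y) = conjC x + conjC y := by
  simp [conjC, Prod.ext_iff]; abel

@[simp] lemma conjC_eq_zero {x : E × E} : conjC x = 0 ↔ x = 0 := by
  simp [conjC, Prod.ext_iff]

end Aux

section Aux2

set_option linter.unusedSectionVars false

/-- `cMinusA` bundled as a continuous linear map. -/
def TcL (ι A : U →L[ℝ] V) (c : ℂ) : (U × U) →L[ℝ] (V × V) :=
  ((c.re • (ι.comp (ContinuousLinearMap.fst ℝ U U))
      - c.im • (ι.comp (ContinuousLinearMap.snd ℝ U U))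
      - A.comp (ContinuousLinearMap.fst ℝ U U)).prod
   (c.im • (ι.comp (ContinuousLinearMap.fst ℝ U U))
      + c.re • (ι.comp (ContinuousLinearMap.snd ℝ U U))
      - A.comp (ContinuousLinearMap.snd ℝ U U)))

lemma TcL_apply (ι A : U →L[ℝ] V) (c : ℂ) (ψ : U × U) :
    TcL ι A c ψ = cMinusA ι A c ψ := rfl

lemma coe_TcL (ι A : U →L[ℝ] V) (c : ℂ) : ⇑(TcL ι A c) = cMinusA ι A c := rfl

/-- `c ↦ csmul c χ` bundled as a continuous linear map. -/
def gL (χ : V × V) : ℂ →L[ℝ] (V × V) :=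
  ((Complex.reCLM.smulRight χ.1 - Complex.imCLM.smulRight χ.2).prod
   (Complex.imCLM.smulRight χ.1 + Complex.reCLM.smulRight χ.2))

lemma gL_apply (χ : V × V) (c : ℂ) : gL χ c = csmul c χ := rfl

lemma cMinusA_csmul (ι A : U →L[ℝ] V) (c d : ℂ) (ψ : U × U) :
    cMinusA ι A c (csmul d ψ) = csmul d (cMinusA ι A c ψ) := by
  simp only [cMinusA, csmul, iotaC, AcC, map_sub, map_add, _root_.map_smul, Prod.mk_sub_mk,
    Prod.mk.injEq]
  constructor <;> module

lemma cMinusA_smul (ι A : U →L[ℝ] V) (c : ℂ) (a : ℝ) (ψ : U × U) :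
    cMinusA ι A c (a • ψ) = a • cMinusA ι A c ψ :=
  map_smul (TcL ι A c) a ψ

lemma cMinusA_sub_cMinusA (ι A : U →L[ℝ] V) (c d : ℂ) (ψ : U × U) :
    cMinusA ι A c ψ - cMinusA ι A d ψ = csmul (c - d) (iotaC ι ψ) := by
  simp only [cMinusA, csmul, iotaC, AcC, Complex.sub_re, Complex.sub_im, Prod.mk_sub_mk,
    Prod.mk.injEq]
  constructor <;> module

lemma conjC_cMinusA_I (ι A : U →L[ℝ] V) (φ : U × U) :
    conjC (cMinusA ι A Complex.I φ) = cMinusA ι A (-Complex.I) (conjC φ) := by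
  simp only [cMinusA, csmul, iotaC, AcC, conjC, Complex.I_re, Complex.I_im, Complex.neg_re,
    Complex.neg_im, map_neg, Prod.mk_sub_mk, Prod.mk.injEq, neg_zero, neg_neg]
  constructor <;> module

lemma conjC_cMinusA_negI (ι A : U →L[ℝ] V) (φ : U × U) :
    conjC (cMinusA ι A (-Complex.I) φ) = cMinusA ι A Complex.I (conjC φ) := by
  simp only [cMinusA, csmul, iotaC, AcC, conjC, Complex.I_re, Complex.I_im, Complex.neg_re,
    Complex.neg_im, map_neg, Prod.mk_sub_mk, Prod.mk.injEq, neg_zero, neg_neg]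
  constructor <;> module

lemma mem_range_add {ι A : U →L[ℝ] V} {c : ℂ} {x y : V × V}
    (hx : x ∈ Set.range (cMinusA ι A c)) (hy : y ∈ Set.range (cMinusA ι A c)) :
    x + y ∈ Set.range (cMinusA ι A c) := by
  obtain ⟨a, rfl⟩ := hx; obtain ⟨b, rfl⟩ := hy
  exact ⟨a + b, by simp only [← TcL_apply, map_add]⟩

lemma mem_range_neg {ι A : U →L[ℝ] V} {c : ℂ} {x : V × V}
    (hx : x ∈ Set.range (cMinusA ι A c)) : -x ∈ Set.range (cMinusA ι A c) := by
  obtain ⟨a, rfl⟩ := hx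
  exact ⟨-a, by simp only [← TcL_apply, map_neg]⟩

lemma mem_range_sub {ι A : U →L[ℝ] V} {c : ℂ} {x y : V × V}
    (hx : x ∈ Set.range (cMinusA ι A c)) (hy : y ∈ Set.range (cMinusA ι A c)) :
    x - y ∈ Set.range (cMinusA ι A c) := by
  obtain ⟨a, rfl⟩ := hx; obtain ⟨b, rfl⟩ := hy
  exact ⟨a - b, by simp only [← TcL_apply, map_sub]⟩

lemma mem_range_csmul {ι A : U →L[ℝ] V} {c : ℂ} (d : ℂ) {x : V × V}
    (hx : x ∈ Set.range (cMinusA ι A c)) : csmul d x ∈ Set.range (cMinusA ι A c) := by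
  obtain ⟨a, rfl⟩ := hx
  exact ⟨csmul d a, cMinusA_csmul ι A c d a⟩

/-- A bounded operator between real Banach spaces with finite-dimensional kernel whose range
has a finite-dimensional algebraic complement (parametrized by `ℂ`) has closed range. -/
lemma isClosed_range_of_finite
    {E F : Type*} [NormedAddCommGroup E] [NormedSpace ℝ E] [CompleteSpace E]
    [NormedAddCommGroup F] [NormedSpace ℝ F] [CompleteSpace F]
    (T : E →L[ℝ] F) (g : ℂ →L[ℝ] F)
    (hker : FiniteDimensional ℝ T.ker)
    (hg : ∀ c : ℂ, c ≠ 0 → g c ∉ Set.range T)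
    (hsurj : ∀ v : F, ∃ c : ℂ, ∃ ψ : E, v = T ψ + g c) :
    IsClosed (Set.range (T : E → F)) := by
  obtain ⟨f, hf⟩ := Submodule.ClosedComplemented.of_finiteDimensional T.ker
  set M : Submodule ℝ E := f.ker with hM
  haveI : CompleteSpace M := (ContinuousLinearMap.isClosed_ker f).completeSpace_coe
  set S : (M × ℂ) →L[ℝ] F :=
    (T.comp (M.subtypeL.comp (ContinuousLinearMap.fst ℝ M ℂ)))
      + g.comp (ContinuousLinearMap.snd ℝ M ℂ) with hSdef
  have hSapp : ∀ (m : M) (c : ℂ), S (m, c) = T (m : E) + g c := fun m c => rfl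
  have hmem : ∀ ψ : E, ψ - ((f ψ : E)) ∈ M := by
    intro ψ
    have : f ((f ψ : E)) = f ψ := hf (f ψ)
    simp [hM, LinearMap.mem_ker, map_sub, this]
  have hTm : ∀ ψ : E, T (ψ - ((f ψ : E))) = T ψ := by
    intro ψ
    have : T ((f ψ : E)) = 0 := (f ψ).2
    simp [map_sub, this]
  have hker' : S.ker = ⊥ := by
    rw [Submodule.eq_bot_iff]
    rintro ⟨m, c⟩ hmc0
    have hmc : T (m : E) + g c = 0 := hmc0
    have hc : c = 0 := by
      by_contra hc0
      exact hg c hc0 ⟨-(m : E), by rw [map_neg]; exact neg_eq_of_add_eq_zero_right hmc⟩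
    subst hc
    simp only [map_zero, add_zero] at hmc
    have hm1 : (m : E) ∈ T.ker := hmc
    have hm2 : f (m : E) = ⟨(m : E), hm1⟩ := hf ⟨(m : E), hm1⟩
    have hm3 : f (m : E) = 0 := m.2
    have hm0 : (m : E) = 0 := congrArg Subtype.val (hm2.symm.trans hm3)
    exact Prod.ext (Subtype.ext hm0) rfl
  have hrange : S.range = ⊤ := by
    rw [LinearMap.range_eq_top]
    intro v
    obtain ⟨c, ψ, hv⟩ := hsurj v
    exact ⟨(⟨ψ - ((f ψ : E)), hmem ψ⟩, c), by rw [ContinuousLinearMap.coe_coe, hSapp]; rw [hTm]; exact hv.symm⟩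
  let e := ContinuousLinearEquiv.ofBijective S hker' hrange
  have he : ∀ x, e x = S x := fun x => rfl
  have hrT : Set.range (T : E → F) = ⇑e '' ((Set.univ : Set M) ×ˢ ({0} : Set ℂ)) := by
    ext v
    constructor
    · rintro ⟨ψ, rfl⟩
      exact ⟨(⟨ψ - ((f ψ : E)), hmem ψ⟩, 0), ⟨trivial, rfl⟩,
        by rw [he, hSapp, hTm, map_zero, add_zero]⟩
    · rintro ⟨⟨m, c⟩, ⟨-, hc⟩, rfl⟩
      simp only [Set.mem_singleton_iff] at hc
      subst hc
      rw [he, hSapp, map_zero, add_zero]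
      exact ⟨m, rfl⟩
  rw [hrT]
  exact e.toHomeomorph.isClosedMap _ (isClosed_univ.prod isClosed_singleton)

end Aux2


/-- **Proposition 3.4 (i).** Assume (H2).  Then `V_c = V⋆ ⊕ V♯`, where
`V⋆ = span_ℂ{ψ⋆, conj ψ⋆}` and `V♯ = ℛ(i - A_c) ∩ ℛ(-i - A_c)` are closed subspaces:
every `v ∈ V_c` decomposes uniquely as `v = c • ψ⋆ + d • conj ψ⋆ + s` with `s ∈ V♯`. -/
theorem Vc_directSum_Vstar_Vsharp
    {V : Type*} [NormedAddCommGroup V] [NormedSpace ℝ V] [CompleteSpace V]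
    {U : Type*} [NormedAddCommGroup U] [NormedSpace ℝ U] [CompleteSpace U]
    (ι A : U →L[ℝ] V) (hι : Function.Injective ι)
    (hUnorm : ∀ u : U, ‖u‖ = ‖A u‖) (hAbij : Function.Bijective A)
    (hH2 : H2hyp ι A)
    (ψs : U × U) (hψs : ψs ∈ kerIA ι A) (hψs0 : ψs ≠ 0) :
    -- `V⋆` and `V♯` are closed subspaces of `V_c`:
    IsClosed {x : V × V | ∃ c d : ℂ,
      x = csmul c (iotaC ι ψs) + csmul d (conjC (iotaC ι ψs))} ∧
    IsClosed (Vsharp ι A) ∧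
    -- existence of the decomposition:
    (∀ v : V × V, ∃ c d : ℂ, ∃ s ∈ Vsharp ι A,
      v = csmul c (iotaC ι ψs) + csmul d (conjC (iotaC ι ψs)) + s) ∧
    -- uniqueness (directness of the sum):
    (∀ c d : ℂ, ∀ s ∈ Vsharp ι A,
      csmul c (iotaC ι ψs) + csmul d (conjC (iotaC ι ψs)) + s = 0 →
        c = 0 ∧ d = 0 ∧ s = 0) := by
  obtain ⟨⟨ψ₀, hψ₀k, hψ₀0, hspan⟩, ⟨χ, hχ, hdec⟩, hH2c⟩ := hH2
  set X := iotaC ι ψs with hXdef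
  set Y := conjC X with hYdef
  have hψsk : cMinusA ι A Complex.I ψs = 0 := hψs
  -- `X ∉ ℛ(i - A_c)`
  have hXR : X ∉ Set.range (cMinusA ι A Complex.I) := hH2c ψs hψs hψs0
  -- `X ∈ ℛ(-i - A_c)`
  have hw : cMinusA ι A (-Complex.I) ((2⁻¹ : ℝ) • csmul Complex.I ψs) = X := by
    have h2 : cMinusA ι A (-Complex.I) ψs = csmul (-Complex.I - Complex.I) X := by
      have := cMinusA_sub_cMinusA ι A (-Complex.I) Complex.I ψs
      rw [hψsk, sub_zero] at this
      exact this
    rw [cMinusA_smul, cMinusA_csmul, h2, csmul_csmul]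
    have hnum : Complex.I * (-Complex.I - Complex.I) = ((2 : ℝ) : ℂ) := by
      push_cast; ring_nf; rw [Complex.I_sq]; ring
    rw [hnum, csmul_real, smul_smul]
    norm_num
  have hXR' : X ∈ Set.range (cMinusA ι A (-Complex.I)) := ⟨_, hw⟩
  -- `Y ∈ ℛ(i - A_c)`
  have hYR : Y ∈ Set.range (cMinusA ι A Complex.I) :=
    ⟨conjC ((2⁻¹ : ℝ) • csmul Complex.I ψs), by rw [← conjC_cMinusA_negI, hw]⟩
  -- `Y ∉ ℛ(-i - A_c)`
  have hYnR' : Y ∉ Set.range (cMinusA ι A (-Complex.I)) := by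
    rintro ⟨φ, hφ⟩
    exact hXR ⟨conjC φ, by rw [← conjC_cMinusA_negI, hφ, hYdef, conjC_conjC]⟩
  -- decomposition along `X`
  have hdecX : ∀ v : V × V, ∃ c : ℂ, ∃ r ∈ Set.range (cMinusA ι A Complex.I),
      v = r + csmul c X := by
    obtain ⟨c₁, r₁, hr₁, hX1⟩ := hdec X
    have hc₁ : c₁ ≠ 0 := by
      rintro rfl
      apply hXR
      rw [hX1, zero_csmul, add_zero]
      exact hr₁
    intro v
    obtain ⟨c, r, hr, hv⟩ := hdec v
    have hcc : csmul c χ = csmul (c * c₁⁻¹) X - csmul (c * c₁⁻¹) r₁ := by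
      have h₂ : csmul c₁ χ = X - r₁ := by rw [hX1]; abel
      have h₃ : csmul c χ = csmul (c * c₁⁻¹) (X - r₁) := by
        rw [← h₂, csmul_csmul]
        congr 1
        field_simp
      rw [h₃, csmul_sub']
    refine ⟨c * c₁⁻¹, r - csmul (c * c₁⁻¹) r₁, mem_range_sub hr (mem_range_csmul _ hr₁), ?_⟩
    rw [hv, hcc]
    abel
  -- decomposition along `Y`
  have hdecY : ∀ v : V × V, ∃ d : ℂ, ∃ s ∈ Set.range (cMinusA ι A (-Complex.I)),
      v = s + csmul d Y := by
    intro v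
    obtain ⟨c, r, ⟨φ, hφ⟩, hv⟩ := hdecX (conjC v)
    refine ⟨starRingEnd ℂ c, conjC r, ⟨conjC φ, by rw [← conjC_cMinusA_I, hφ]⟩, ?_⟩
    have h1 := congrArg conjC hv
    rwa [conjC_conjC, conjC_add', conjC_csmul, ← hYdef] at h1
  -- closedness of `V⋆`
  have hclosedStar : IsClosed {x : V × V | ∃ c d : ℂ, x = csmul c X + csmul d Y} := by
    let L : (ℂ × ℂ) →ₗ[ℝ] (V × V) :=
      { toFun := fun p => csmul p.1 X + csmul p.2 Y
        map_add' := by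
          intro p q
          simp only [Prod.fst_add, Prod.snd_add, add_csmul']
          abel
        map_smul' := by
          intro a p
          simp only [Prod.smul_fst, Prod.smul_snd, RingHom.id_apply, smul_csmul, smul_add] }
    have hset : {x : V × V | ∃ c d : ℂ, x = csmul c X + csmul d Y}
        = ↑(LinearMap.range L) := by
      ext x
      simp only [SetLike.mem_coe, LinearMap.mem_range, Set.mem_setOf_eq]
      constructor
      · rintro ⟨c, d, rfl⟩; exact ⟨(c, d), rfl⟩
      · rintro ⟨⟨c, d⟩, rfl⟩; exact ⟨c, d, rfl⟩
    rw [hset]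
    exact Submodule.closed_of_finiteDimensional _
  -- finite-dimensionality of the kernels
  haveI hfinspan : FiniteDimensional ℝ
      (Submodule.span ℝ ({ψ₀, csmul Complex.I ψ₀} : Set (U × U))) :=
    FiniteDimensional.span_of_finite ℝ (Set.Finite.insert _ (Set.finite_singleton _))
  haveI hfinspan' : FiniteDimensional ℝ
      (Submodule.span ℝ ({conjC ψ₀, csmul Complex.I (conjC ψ₀)} : Set (U × U))) :=
    FiniteDimensional.span_of_finite ℝ (Set.Finite.insert _ (Set.finite_singleton _))
  have hfinK : FiniteDimensional ℝ ((TcL ι A Complex.I).ker) := by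
    have hle : (TcL ι A Complex.I).ker
        ≤ Submodule.span ℝ ({ψ₀, csmul Complex.I ψ₀} : Set (U × U)) := by
      intro φ hφ
      rw [LinearMap.mem_ker, ContinuousLinearMap.coe_coe, TcL_apply] at hφ
      obtain ⟨cφ, hcφ⟩ := hspan φ hφ
      have hmem : csmul cφ ψ₀ ∈ Submodule.span ℝ ({ψ₀, csmul Complex.I ψ₀} : Set (U × U)) := by
        rw [csmul_eq_smul_add cφ ψ₀]
        exact Submodule.add_mem _
          (Submodule.smul_mem _ _ (Submodule.subset_span (Set.mem_insert _ _)))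
          (Submodule.smul_mem _ _ (Submodule.subset_span (Set.mem_insert_of_mem _ rfl)))
      rw [hcφ]
      exact hmem
    exact Submodule.finiteDimensional_of_le hle
  have hfinK' : FiniteDimensional ℝ ((TcL ι A (-Complex.I)).ker) := by
    have hle : (TcL ι A (-Complex.I)).ker
        ≤ Submodule.span ℝ ({conjC ψ₀, csmul Complex.I (conjC ψ₀)} : Set (U × U)) := by
      intro φ hφ
      rw [LinearMap.mem_ker, ContinuousLinearMap.coe_coe, TcL_apply] at hφ
      have hφ' : cMinusA ι A (-Complex.I) φ = 0 := hφ
      have hφ'' : cMinusA ι A Complex.I (conjC φ) = 0 := by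
        rw [← conjC_cMinusA_negI, hφ']
        exact conjC_eq_zero.mpr rfl
      obtain ⟨cφ, hcφ⟩ := hspan (conjC φ) hφ''
      have hφeq : φ = csmul (starRingEnd ℂ cφ) (conjC ψ₀) := by
        have h := congrArg conjC hcφ
        rwa [conjC_conjC, conjC_csmul] at h
      have hmem : csmul (starRingEnd ℂ cφ) (conjC ψ₀) ∈
          Submodule.span ℝ ({conjC ψ₀, csmul Complex.I (conjC ψ₀)} : Set (U × U)) := by
        rw [csmul_eq_smul_add (starRingEnd ℂ cφ) (conjC ψ₀)]
        exact Submodule.add_mem _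
          (Submodule.smul_mem _ _ (Submodule.subset_span (Set.mem_insert _ _)))
          (Submodule.smul_mem _ _ (Submodule.subset_span (Set.mem_insert_of_mem _ rfl)))
      rw [hφeq]
      exact hmem
    exact Submodule.finiteDimensional_of_le hle
  -- closedness of the two ranges
  have hclR : IsClosed (Set.range (cMinusA ι A Complex.I)) := by
    rw [← coe_TcL]
    apply isClosed_range_of_finite (TcL ι A Complex.I) (gL χ) hfinK
    · rintro c hc0 ⟨φ, hφ⟩
      apply hχ
      have hφ' : cMinusA ι A Complex.I φ = csmul c χ := hφ
      have hgoal : χ = cMinusA ι A Complex.I (csmul c⁻¹ φ) := by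
        rw [cMinusA_csmul, hφ', csmul_csmul, inv_mul_cancel₀ hc0, csmul_one]
      exact ⟨_, hgoal.symm⟩
    · intro v
      obtain ⟨c, r, ⟨φ, hφ⟩, hv⟩ := hdec v
      exact ⟨c, φ, by rw [hv, ← hφ]; rfl⟩
  have hclR' : IsClosed (Set.range (cMinusA ι A (-Complex.I))) := by
    rw [← coe_TcL]
    apply isClosed_range_of_finite (TcL ι A (-Complex.I)) (gL (conjC χ)) hfinK'
    · rintro c hc0 ⟨φ, hφ⟩
      apply hχ
      have hφ' : cMinusA ι A (-Complex.I) φ = csmul c (conjC χ) := hφ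
      have hc1 : cMinusA ι A Complex.I (conjC φ) = csmul (starRingEnd ℂ c) χ := by
        rw [← conjC_cMinusA_negI, hφ', conjC_csmul, conjC_conjC]
      have hcs : starRingEnd ℂ c ≠ 0 := by simpa using hc0
      have hgoal : χ = cMinusA ι A Complex.I (csmul (starRingEnd ℂ c)⁻¹ (conjC φ)) := by
        rw [cMinusA_csmul, hc1, csmul_csmul, inv_mul_cancel₀ hcs, csmul_one]
      exact ⟨_, hgoal.symm⟩
    · intro v
      obtain ⟨c, r, ⟨φ, hφ⟩, hv⟩ := hdec (conjC v)
      refine ⟨starRingEnd ℂ c, conjC φ, ?_⟩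
      have h1 := congrArg conjC hv
      rw [conjC_conjC, conjC_add', conjC_csmul, ← hφ, conjC_cMinusA_I] at h1
      exact h1
  refine ⟨hclosedStar, hclR.inter hclR', ?_, ?_⟩
  · -- existence of the decomposition
    intro v
    obtain ⟨c, r, hr, hv⟩ := hdecX v
    obtain ⟨d, s, hs', hr'⟩ := hdecY r
    have hsR : s ∈ Set.range (cMinusA ι A Complex.I) := by
      have hseq : s = r - csmul d Y := by rw [hr']; abel
      rw [hseq]
      exact mem_range_sub hr (mem_range_csmul d hYR)
    exact ⟨c, d, s, ⟨hsR, hs'⟩, by rw [hv, hr']; abel⟩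
  · -- uniqueness
    intro c d s hsV h0
    have hsR : s ∈ Set.range (cMinusA ι A Complex.I) := hsV.1
    have hsR' : s ∈ Set.range (cMinusA ι A (-Complex.I)) := hsV.2
    have hc : c = 0 := by
      by_contra hc0
      apply hXR
      have h0' : csmul c X + (csmul d Y + s) = 0 := by rw [← h0]; abel
      have hx : csmul c X = -(csmul d Y + s) := eq_neg_of_add_eq_zero_left h0'
      have hmem : csmul c X ∈ Set.range (cMinusA ι A Complex.I) := by
        rw [hx]
        exact mem_range_neg (mem_range_add (mem_range_csmul d hYR) hsR)
      have hXeq : X = csmul c⁻¹ (csmul c X) := by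
        rw [csmul_csmul, inv_mul_cancel₀ hc0, csmul_one]
      rw [hXeq]
      exact mem_range_csmul _ hmem
    rw [hc, zero_csmul, zero_add] at h0
    have hd : d = 0 := by
      by_contra hd0
      apply hYnR'
      have hy : csmul d Y = -s := eq_neg_of_add_eq_zero_left h0
      have hmem : csmul d Y ∈ Set.range (cMinusA ι A (-Complex.I)) := by
        rw [hy]
        exact mem_range_neg hsR'
      have hYeq : Y = csmul d⁻¹ (csmul d Y) := by
        rw [csmul_csmul, inv_mul_cancel₀ hd0, csmul_one]
      rw [hYeq]
      exact mem_range_csmul _ hmem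
    rw [hd, zero_csmul, zero_add] at h0
    exact ⟨hc, hd, h0⟩
end HopfStmt
end
end
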